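/- arXiv:2605.12032 — 2 statements merged into one kernel-verified Lean document; each statement's English description precedes it below -/
import Mathlib

section
/- Let λ > 0, c, α, k > 0, and C ≥ 0 be constants, and choose ε ∈ (0,1) such that -cαkε²/(λ(1-ε²)) + C < 0. Suppose e : [t₀, t₁] → ℝ is continuously differentiable with |e(t)| < 1 for all t, e(t)·ė(t) ≤ -cαk e(t)²/(λ(1-e(t)²)) + C for all t ∈ [t₀,t₁], and |e(t)| ≥ ε on [t₀, t₁] with |e(t₀)| = ε. Then e(t₁)² ≤ ε². -/
/-- Funnel-control barrier argument: on `[t₀,t₁]`, if `|e| ∈ [ε,1)`, `|e(t₀)| = ε`, and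
`e ė ≤ -cαk e²/(λ(1-e²)) + C` with `-cαkε²/(λ(1-ε²)) + C < 0`, then `e(t₁)² ≤ ε²`. -/
theorem funnel_barrier
    (lam c α k C ε : ℝ) (hlam : 0 < lam) (hc : 0 < c) (hα : 0 < α) (hk : 0 < k)
    (hC : 0 ≤ C) (hε : ε ∈ Set.Ioo (0 : ℝ) 1)
    (hkey : -(c * α * k * ε ^ 2) / (lam * (1 - ε ^ 2)) + C < 0)
    (t₀ t₁ : ℝ) (ht : t₀ ≤ t₁)
    (e e' : ℝ → ℝ)
    (hderiv : ∀ t ∈ Set.Icc t₀ t₁, HasDerivAt e (e' t) t)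
    (hcont : ContinuousOn e' (Set.Icc t₀ t₁))
    (hlt : ∀ t ∈ Set.Icc t₀ t₁, |e t| < 1)
    (hineq : ∀ t ∈ Set.Icc t₀ t₁,
      e t * e' t ≤ -(c * α * k * (e t) ^ 2) / (lam * (1 - (e t) ^ 2)) + C)
    (hge : ∀ t ∈ Set.Icc t₀ t₁, ε ≤ |e t|)
    (hstart : |e t₀| = ε) :
    (e t₁) ^ 2 ≤ ε ^ 2 := by
  obtain ⟨hε0, hε1⟩ := hε
  -- e·e' ≤ 0 on the interval
  have hneg : ∀ t ∈ Set.Icc t₀ t₁, e t * e' t ≤ 0 := by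
    intro t htmem
    have ha1 : (e t) ^ 2 < 1 := by
      have := hlt t htmem
      nlinarith [sq_abs (e t), abs_nonneg (e t)]
    have ha2 : ε ^ 2 ≤ (e t) ^ 2 := by
      have := hge t htmem
      nlinarith [sq_abs (e t), abs_nonneg (e t)]
    have hfrac : -(c * α * k * (e t) ^ 2) / (lam * (1 - (e t) ^ 2)) + C ≤
        -(c * α * k * ε ^ 2) / (lam * (1 - ε ^ 2)) + C := by
      have hd1 : 0 < lam * (1 - (e t) ^ 2) := by nlinarith
      have hd2 : 0 < lam * (1 - ε ^ 2) := by nlinarith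
      have : (c * α * k * ε ^ 2) / (lam * (1 - ε ^ 2)) ≤
          (c * α * k * (e t) ^ 2) / (lam * (1 - (e t) ^ 2)) := by
        rw [div_le_div_iff₀ hd2 hd1]
        have key : 0 ≤ c * α * k * lam * ((e t) ^ 2 - ε ^ 2) :=
          mul_nonneg (mul_nonneg (mul_nonneg (mul_nonneg hc.le hα.le) hk.le) hlam.le)
            (by linarith)
        nlinarith [key]
      linarith [neg_div (lam * (1 - ε ^ 2)) (c * α * k * ε ^ 2),
        neg_div (lam * (1 - (e t) ^ 2)) (c * α * k * (e t) ^ 2)]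
    have := hineq t htmem
    linarith
  -- the function e² is antitone on [t₀,t₁]
  have hconv : Convex ℝ (Set.Icc t₀ t₁) := convex_Icc _ _
  have hgderiv : ∀ t ∈ Set.Icc t₀ t₁, HasDerivAt (fun s => (e s) ^ 2) (2 * e t * e' t) t := by
    intro t htmem
    have h := (hderiv t htmem).fun_pow 2
    simpa [mul_comm, mul_assoc, mul_left_comm] using h
  have hgcont : ContinuousOn (fun s => (e s) ^ 2) (Set.Icc t₀ t₁) := by
    intro t htmem
    exact ((hgderiv t htmem).continuousAt).continuousWithinAt
  have hanti : AntitoneOn (fun s => (e s) ^ 2) (Set.Icc t₀ t₁) := by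
    apply antitoneOn_of_deriv_nonpos hconv hgcont
    · intro t htmem
      have htmem' : t ∈ Set.Icc t₀ t₁ := interior_subset htmem
      exact ((hgderiv t htmem').differentiableAt).differentiableWithinAt
    · intro t htmem
      have htmem' : t ∈ Set.Icc t₀ t₁ := interior_subset htmem
      rw [interior_Icc] at htmem
      have hd : deriv (fun s => (e s) ^ 2) t = 2 * e t * e' t :=
        (hgderiv t htmem').deriv
      rw [hd]
      have := hneg t htmem'
      nlinarith
  have h0 : t₀ ∈ Set.Icc t₀ t₁ := ⟨le_refl _, ht⟩
  have h1 : t₁ ∈ Set.Icc t₀ t₁ := ⟨ht, le_refl _⟩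
  have := hanti h0 h1 ht
  calc (e t₁) ^ 2 ≤ (e t₀) ^ 2 := this
    _ = ε ^ 2 := by rw [← hstart, sq_abs]
end

section
/- Let ℓ > 0, X = L²([0,ℓ],ℝ)² × ℝ with weighted inner product ⟨(τ₁,L₁,L_{b1}),(τ₂,L₂,L_{b2})⟩ = ∫₀^ℓ (G τ₁τ₂ + ρ⁻¹L₁L₂) dξ + J⁻¹Γ⁻¹ L_{b1}L_{b2}, where G, ρ, J, Γ > 0 are constants. Let D be defined on the domain of triples (τ, L, L_b) with Gτ, ρ⁻¹L ∈ W^{1,2}([0,ℓ]), (ρ⁻¹L)(ℓ) = J⁻¹L_b, and (Gτ)(0) = 0, by D(τ,L,L_b) = (-(ρ⁻¹L)', -(Gτ)', Γ(Gτ)(ℓ)). Then D is skew-symmetric: ⟨x₁, Dx₂⟩ + ⟨Dx₁, x₂⟩ = 0 for all x₁, x₂ ∈ dom(D). -/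
/-- Skew-symmetry of the drill-string operator
`D(τ,L,L_b) = (-(ρ⁻¹L)', -(Gτ)', Γ(Gτ)(ℓ))` on the domain with boundary conditions
`(ρ⁻¹L)(ℓ) = J⁻¹L_b` and `(Gτ)(0) = 0`, with respect to the weighted inner product
`⟨x₁,x₂⟩ = ∫₀^ℓ (Gτ₁τ₂ + ρ⁻¹L₁L₂) + J⁻¹Γ⁻¹ L_{b1}L_{b2}`:
one has `⟨x₁, Dx₂⟩ + ⟨Dx₁, x₂⟩ = 0`. -/
theorem drillstring_operator_skew_symmetric
    (ℓ G ρ J Γ : ℝ) (hℓ : 0 < ℓ) (hG : 0 < G) (hρ : 0 < ρ) (hJ : 0 < J) (hΓ : 0 < Γ)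
    (τ₁ τ₂ L₁ L₂ τ₁' τ₂' L₁' L₂' : ℝ → ℝ) (Lb₁ Lb₂ : ℝ)
    (hτ₁ : ∀ ξ, HasDerivAt τ₁ (τ₁' ξ) ξ) (hτ₂ : ∀ ξ, HasDerivAt τ₂ (τ₂' ξ) ξ)
    (hL₁ : ∀ ξ, HasDerivAt L₁ (L₁' ξ) ξ) (hL₂ : ∀ ξ, HasDerivAt L₂ (L₂' ξ) ξ)
    (hτ₁' : Continuous τ₁') (hτ₂' : Continuous τ₂')
    (hL₁' : Continuous L₁') (hL₂' : Continuous L₂')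
    -- boundary conditions of dom(D):
    (hbd₁ : ρ⁻¹ * L₁ ℓ = J⁻¹ * Lb₁) (hbd₂ : ρ⁻¹ * L₂ ℓ = J⁻¹ * Lb₂)
    (hb0₁ : G * τ₁ 0 = 0) (hb0₂ : G * τ₂ 0 = 0) :
    ((∫ ξ in (0:ℝ)..ℓ,
        G * τ₁ ξ * (-(ρ⁻¹ * L₂' ξ)) + ρ⁻¹ * L₁ ξ * (-(G * τ₂' ξ)))
      + J⁻¹ * Γ⁻¹ * Lb₁ * (Γ * (G * τ₂ ℓ)))
    + ((∫ ξ in (0:ℝ)..ℓ,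
        G * (-(ρ⁻¹ * L₁' ξ)) * τ₂ ξ + ρ⁻¹ * (-(G * τ₁' ξ)) * L₂ ξ)
      + J⁻¹ * Γ⁻¹ * (Γ * (G * τ₁ ℓ)) * Lb₂) = 0 := by
  have hcτ₁ : Continuous τ₁ := continuous_iff_continuousAt.mpr fun y => (hτ₁ y).continuousAt
  have hcτ₂ : Continuous τ₂ := continuous_iff_continuousAt.mpr fun y => (hτ₂ y).continuousAt
  have hcL₁ : Continuous L₁ := continuous_iff_continuousAt.mpr fun y => (hL₁ y).continuousAt
  have hcL₂ : Continuous L₂ := continuous_iff_continuousAt.mpr fun y => (hL₂ y).continuousAt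
  set F : ℝ → ℝ := fun ξ => -(G * ρ⁻¹) * (τ₁ ξ * L₂ ξ + L₁ ξ * τ₂ ξ) with hF
  have hF' : ∀ ξ, HasDerivAt F
      ((G * τ₁ ξ * (-(ρ⁻¹ * L₂' ξ)) + ρ⁻¹ * L₁ ξ * (-(G * τ₂' ξ)))
        + (G * (-(ρ⁻¹ * L₁' ξ)) * τ₂ ξ + ρ⁻¹ * (-(G * τ₁' ξ)) * L₂ ξ)) ξ := by
    intro ξ
    have := (((hτ₁ ξ).mul (hL₂ ξ)).add ((hL₁ ξ).mul (hτ₂ ξ))).const_mul (-(G * ρ⁻¹))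
    exact this.congr_deriv (by ring)
  have hcont : Continuous fun ξ =>
      (G * τ₁ ξ * (-(ρ⁻¹ * L₂' ξ)) + ρ⁻¹ * L₁ ξ * (-(G * τ₂' ξ)))
        + (G * (-(ρ⁻¹ * L₁' ξ)) * τ₂ ξ + ρ⁻¹ * (-(G * τ₁' ξ)) * L₂ ξ) := by
    fun_prop
  have hint : (∫ ξ in (0:ℝ)..ℓ,
      (G * τ₁ ξ * (-(ρ⁻¹ * L₂' ξ)) + ρ⁻¹ * L₁ ξ * (-(G * τ₂' ξ)))
        + (G * (-(ρ⁻¹ * L₁' ξ)) * τ₂ ξ + ρ⁻¹ * (-(G * τ₁' ξ)) * L₂ ξ)) = F ℓ - F 0 :=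
    intervalIntegral.integral_eq_sub_of_hasDerivAt (fun x _ => hF' x)
      (hcont.intervalIntegrable 0 ℓ)
  rw [intervalIntegral.integral_add] at hint
  · have hτ₁0 : τ₁ 0 = 0 := by
      exact (mul_eq_zero.mp hb0₁).resolve_left hG.ne'
    have hτ₂0 : τ₂ 0 = 0 := by
      exact (mul_eq_zero.mp hb0₂).resolve_left hG.ne'
    have h1 : J⁻¹ * Γ⁻¹ * Lb₁ * (Γ * (G * τ₂ ℓ)) = ρ⁻¹ * L₁ ℓ * (G * τ₂ ℓ) := by
      rw [hbd₁]; field_simp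
    have h2 : J⁻¹ * Γ⁻¹ * (Γ * (G * τ₁ ℓ)) * Lb₂ = G * τ₁ ℓ * (ρ⁻¹ * L₂ ℓ) := by
      rw [hbd₂]; field_simp
    rw [h1, h2]
    have : F ℓ - F 0 = -(G * ρ⁻¹) * (τ₁ ℓ * L₂ ℓ + L₁ ℓ * τ₂ ℓ) := by
      simp [hF, hτ₁0, hτ₂0]
    linarith [hint, this ▸ hint]
  · exact (by fun_prop : Continuous fun ξ =>
      G * τ₁ ξ * (-(ρ⁻¹ * L₂' ξ)) + ρ⁻¹ * L₁ ξ * (-(G * τ₂' ξ))).intervalIntegrable 0 ℓ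
  · exact (by fun_prop : Continuous fun ξ =>
      G * (-(ρ⁻¹ * L₁' ξ)) * τ₂ ξ + ρ⁻¹ * (-(G * τ₁' ξ)) * L₂ ξ).intervalIntegrable 0 ℓ
end
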